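/- Let X ∈ ℝ^{I₁×I₂×I₃} and X̂ = fft(X, [], 3) be its slice-wise Fourier transform along the third mode. If B̂(:,:,k) is the (matrix) Moore–Penrose pseudoinverse of X̂(:,:,k) for each k = 1,…,I₃, then B = ifft(B̂, [], 3) is the Moore–Penrose pseudoinverse of X with respect to the t-product, i.e., B satisfies the four tensor Penrose equations. -/

import Mathlib

open scoped BigOperators
open Matrix

/-- A third-order real tensor of size a × b × n; the third (tube) mode is
indexed by `ZMod n` so that the circular structure of the t-product is built in
(index k corresponds to frontal slice k+1 of the paper). -/
abbrev Tensor3 (a b n : ℕ) : Type := Fin a → Fin b → ZMod n → ℝ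

/-- The t-product X * Y = fold(circ(X) · unfold(Y)). -/
def tmul {a b c n : ℕ} [NeZero n] (X : Tensor3 a b n) (Y : Tensor3 b c n) :
    Tensor3 a c n :=
  fun i j k => ∑ l : Fin b, ∑ m : ZMod n, X i l (k - m) * Y l j m

/-- The identity tensor: first frontal slice the identity matrix, rest zero. -/
def tId (a n : ℕ) : Tensor3 a a n := fun i j k => if i = j ∧ k = 0 then 1 else 0

/-- The tensor transpose: transpose every frontal slice and reverse the order
of the transposed slices 2 through n. -/
def tTr {a b n : ℕ} (X : Tensor3 a b n) : Tensor3 b a n := fun i j k => X j i (-k)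

/-- The four Penrose equations for the Moore-Penrose pseudoinverse of a tensor
under the t-product (Definition 6 of the paper). -/
def tIsMP {a b n : ℕ} [NeZero n] (X : Tensor3 a b n) (B : Tensor3 b a n) : Prop :=
  tmul X (tmul B X) = X ∧ tmul B (tmul X B) = B ∧
    tTr (tmul X B) = tmul X B ∧ tTr (tmul B X) = tmul B X

/-- The (unnormalized) discrete Fourier transform of a tube, with
ω = exp(−2πi/n): (dft x) k = Σ_m x_m ω^{k·m}. -/
noncomputable def dft (n : ℕ) [NeZero n] (x : ZMod n → ℝ) (k : ZMod n) : ℂ :=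
  ∑ m : ZMod n, (x m : ℂ) * Complex.exp (-(2 * Real.pi * Complex.I) / n) ^ (k.val * m.val)

/-- The k-th frontal slice of fft(X,[],3): the DFT along every tube. -/
noncomputable def dftSlice {a b n : ℕ} [NeZero n] (X : Tensor3 a b n) (k : ZMod n) :
    Matrix (Fin a) (Fin b) ℂ := fun i j => dft n (X i j) k

/-- The four Penrose equations characterizing the matrix Moore-Penrose
pseudoinverse. -/
def Matrix.IsMoorePenrose {m n : Type*} [Fintype m] [Fintype n] {R : Type*}
    [Field R] [StarRing R] (A : Matrix m n R) (B : Matrix n m R) : Prop :=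
  A * B * A = A ∧ B * A * B = B ∧ (A * B)ᴴ = A * B ∧ (B * A)ᴴ = B * A

namespace St15
variable {n : ℕ} [NeZero n]

noncomputable def w (n : ℕ) : ℂ := Complex.exp (-(2 * Real.pi * Complex.I) / n)

lemma w_pow_n : w n ^ n = 1 := by
  rw [w, ← Complex.exp_nat_mul]
  have hn : (n:ℂ) ≠ 0 := Nat.cast_ne_zero.mpr (NeZero.ne n)
  rw [show ((n:ℂ) * (-(2 * Real.pi * Complex.I) / n)) = -(2 * Real.pi * Complex.I) by
    field_simp]
  rw [Complex.exp_neg, Complex.exp_two_pi_mul_I, inv_one]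

lemma w_pow_mod (a : ℕ) : w n ^ a = w n ^ (a % n) := by
  conv_lhs => rw [← Nat.div_add_mod a n]
  rw [pow_add, pow_mul, w_pow_n, one_pow, one_mul]

lemma w_ne_zero : w n ≠ 0 := Complex.exp_ne_zero _

noncomputable def e (c : ZMod n) : ℂ := w n ^ c.val

lemma e_add (a b : ZMod n) : e (a + b) = e a * e b := by
  rw [e, e, e, ZMod.val_add, ← w_pow_mod, pow_add]

lemma e_mul_val (a b : ZMod n) : e (a * b) = w n ^ (a.val * b.val) := by
  rw [e, ZMod.val_mul, ← w_pow_mod]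

lemma e_zero : e (0 : ZMod n) = 1 := by simp [e]

lemma conj_w : (starRingEnd ℂ) (w n) = (w n)⁻¹ := by
  rw [w, ← Complex.exp_conj, ← Complex.exp_neg]
  congr 1
  simp only [map_div₀, map_neg, _root_.map_mul, Complex.conj_I, Complex.conj_ofReal, map_ofNat,
    Complex.conj_natCast]
  ring

lemma conj_e (c : ZMod n) : (starRingEnd ℂ) (e c) = e (-c) := by
  have h1 : e (-c) * e c = 1 := by rw [← e_add, neg_add_cancel, e_zero]
  have h2 : (starRingEnd ℂ) (e c) * e c = 1 := by
    rw [e, map_pow, conj_w, inv_pow, inv_mul_cancel₀ (pow_ne_zero _ w_ne_zero)]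
  exact mul_right_cancel₀ (pow_ne_zero _ w_ne_zero) (h2.trans h1.symm)

lemma sum_e (c : ZMod n) : ∑ k : ZMod n, e (k * c) = if c = 0 then (n:ℂ) else 0 := by
  split_ifs with hc
  · subst hc
    simp only [mul_zero, e_zero, Finset.sum_const, Finset.card_univ, ZMod.card, nsmul_eq_mul,
      mul_one]
  · have hn := NeZero.ne n
    have hprim : IsPrimitiveRoot (w n) n := by
      have := Complex.isPrimitiveRoot_exp n hn
      have : IsPrimitiveRoot (Complex.exp (2 * Real.pi * Complex.I / n))⁻¹ n := this.inv
      rw [w, neg_div]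
      rwa [← Complex.exp_neg] at this
    set z := w n ^ c.val with hz
    have hz1 : z ≠ 1 := hprim.pow_ne_one_of_pos_of_lt (ZMod.val_pos.mpr hc).ne' (ZMod.val_lt c)
    have hzn : z ^ n = 1 := by rw [hz, ← pow_mul, mul_comm, pow_mul, w_pow_n, one_pow]
    calc ∑ k : ZMod n, e (k * c) = ∑ k : ZMod n, z ^ k.val := by
          refine Finset.sum_congr rfl fun k _ => ?_
          rw [e_mul_val, hz, ← pow_mul, mul_comm]
      _ = ∑ i ∈ Finset.range n, z ^ i := by
          refine Finset.sum_nbij' (fun k => k.val) (fun i => (i : ZMod n)) ?_ ?_ ?_ ?_ ?_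
          · intro k _; exact Finset.mem_range.mpr (ZMod.val_lt k)
          · intro i _; exact Finset.mem_univ _
          · intro k _; exact ZMod.natCast_rightInverse k
          · intro i hi; exact ZMod.val_cast_of_lt (Finset.mem_range.mp hi)
          · intro k _; rfl
      _ = 0 := by
          rw [geom_sum_eq hz1, hzn, sub_self, zero_div]

end St15

namespace St15
variable {n : ℕ} [NeZero n]

lemma dft_eq (x : ZMod n → ℝ) (k : ZMod n) :
    dft n x k = ∑ m : ZMod n, (x m : ℂ) * e (k * m) :=
  Finset.sum_congr rfl fun m _ => by rw [e_mul_val, w]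

lemma dft_conv (f g : ZMod n → ℝ) (k : ZMod n) :
    dft n (fun s => ∑ m : ZMod n, f (s - m) * g m) k = dft n f k * dft n g k := by
  have key : ∀ m : ZMod n, ∑ s : ZMod n, (f (s - m) : ℂ) * (g m : ℂ) * e (k * s)
      = dft n f k * ((g m : ℂ) * e (k * m)) := by
    intro m
    rw [dft_eq, Finset.sum_mul]
    refine Fintype.sum_equiv (Equiv.subRight m) _ _ fun s => ?_
    simp only [Equiv.subRight_apply]
    have he : e (k * (s - m)) * e (k * m) = e (k * s) := by
      rw [← e_add, mul_sub, sub_add_cancel]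
    calc (f (s - m) : ℂ) * (g m : ℂ) * e (k * s)
        = (f (s - m) : ℂ) * (g m : ℂ) * (e (k * (s - m)) * e (k * m)) := by rw [he]
      _ = (f (s - m) : ℂ) * e (k * (s - m)) * ((g m : ℂ) * e (k * m)) := by ring
  calc dft n (fun s => ∑ m : ZMod n, f (s - m) * g m) k
      = ∑ s : ZMod n, ((∑ m : ZMod n, f (s - m) * g m : ℝ) : ℂ) * e (k * s) := dft_eq _ k
    _ = ∑ s : ZMod n, ∑ m : ZMod n, (f (s - m) : ℂ) * (g m : ℂ) * e (k * s) := by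
        refine Finset.sum_congr rfl fun s _ => ?_
        push_cast
        rw [Finset.sum_mul]
    _ = ∑ m : ZMod n, ∑ s : ZMod n, (f (s - m) : ℂ) * (g m : ℂ) * e (k * s) :=
        Finset.sum_comm
    _ = ∑ m : ZMod n, dft n f k * ((g m : ℂ) * e (k * m)) :=
        Finset.sum_congr rfl fun m _ => key m
    _ = dft n f k * dft n g k := by rw [← Finset.mul_sum, ← dft_eq]

lemma dft_neg (x : ZMod n → ℝ) (k : ZMod n) :
    dft n (fun m => x (-m)) k = (starRingEnd ℂ) (dft n x k) := by
  rw [dft_eq, dft_eq, map_sum]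
  refine Fintype.sum_equiv (Equiv.neg (ZMod n)) _ _ fun m => ?_
  simp only [Equiv.neg_apply]
  rw [_root_.map_mul, Complex.conj_ofReal, conj_e, mul_neg, neg_neg]

lemma dft_inv (x : ZMod n → ℝ) (j : ZMod n) :
    (n : ℂ) * (x j : ℂ) = ∑ k : ZMod n, dft n x k * e (-(k * j)) := by
  symm
  calc ∑ k : ZMod n, dft n x k * e (-(k * j))
      = ∑ k : ZMod n, ∑ m : ZMod n, (x m : ℂ) * (e (k * m) * e (-(k * j))) := by
        refine Finset.sum_congr rfl fun k _ => ?_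
        rw [dft_eq, Finset.sum_mul]
        exact Finset.sum_congr rfl fun m _ => by ring
    _ = ∑ m : ZMod n, ∑ k : ZMod n, (x m : ℂ) * e (k * (m - j)) := by
        rw [Finset.sum_comm]
        refine Finset.sum_congr rfl fun m _ => Finset.sum_congr rfl fun k _ => ?_
        rw [← e_add, mul_sub, sub_eq_add_neg]
    _ = ∑ m : ZMod n, (x m : ℂ) * (if m - j = 0 then (n : ℂ) else 0) := by
        refine Finset.sum_congr rfl fun m _ => ?_
        rw [← Finset.mul_sum, sum_e]
    _ = ∑ m : ZMod n, (if m = j then (n : ℂ) * (x m : ℂ) else 0) := by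
        refine Finset.sum_congr rfl fun m _ => ?_
        simp only [sub_eq_zero]
        by_cases hm : m = j <;> simp [hm, mul_comm]
    _ = (n : ℂ) * (x j : ℂ) := by rw [Finset.sum_ite_eq' Finset.univ j]; simp

lemma dft_inj {x y : ZMod n → ℝ} (h : ∀ k, dft n x k = dft n y k) : x = y := by
  funext j
  have hn : (n : ℂ) ≠ 0 := Nat.cast_ne_zero.mpr (NeZero.ne n)
  have h2 : (n : ℂ) * (x j : ℂ) = (n : ℂ) * (y j : ℂ) := by
    rw [dft_inv, dft_inv]
    exact Finset.sum_congr rfl fun k _ => by rw [h k]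
  exact_mod_cast mul_left_cancel₀ hn h2

lemma dftSlice_tmul {a b c : ℕ} (X : Tensor3 a b n) (Y : Tensor3 b c n) (k : ZMod n) :
    dftSlice (tmul X Y) k = dftSlice X k * dftSlice Y k := by
  ext i j
  rw [Matrix.mul_apply]
  show dft n (fun s => ∑ l : Fin b, ∑ m : ZMod n, X i l (s - m) * Y l j m) k = _
  have : dft n (fun s => ∑ l : Fin b, ∑ m : ZMod n, X i l (s - m) * Y l j m) k
      = ∑ l : Fin b, dft n (fun s => ∑ m : ZMod n, X i l (s - m) * Y l j m) k := by
    simp only [dft_eq]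
    rw [Finset.sum_comm]
    refine Finset.sum_congr rfl fun s _ => ?_
    push_cast
    rw [Finset.sum_mul]
  rw [this]
  exact Finset.sum_congr rfl fun l _ => dft_conv _ _ k

lemma dftSlice_tTr {a b : ℕ} (X : Tensor3 a b n) (k : ZMod n) :
    dftSlice (tTr X) k = (dftSlice X k)ᴴ := by
  ext i j
  show dft n (fun m => X j i (-m)) k = star (dft n (X j i) k)
  exact dft_neg _ k

lemma dftSlice_inj {a b : ℕ} {X Y : Tensor3 a b n}
    (h : ∀ k, dftSlice X k = dftSlice Y k) : X = Y := by
  funext i j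
  have := dft_inj (x := X i j) (y := Y i j) fun k => congrFun (congrFun (h k) i) j
  rw [this]

end St15

/-- Slice-wise Moore-Penrose pseudoinverses in the Fourier domain yield the
tensor Moore-Penrose pseudoinverse under the t-product (Algorithm 2). -/

theorem stmt15 {I₁ I₂ I₃ : ℕ} [NeZero I₃]
    (X : Tensor3 I₁ I₂ I₃) (B : Tensor3 I₂ I₁ I₃)
    (h : ∀ k : ZMod I₃, Matrix.IsMoorePenrose (dftSlice X k) (dftSlice B k)) :
    tIsMP X B := by
  refine ⟨?_, ?_, ?_, ?_⟩
  · refine St15.dftSlice_inj fun k => ?_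
    rw [St15.dftSlice_tmul, St15.dftSlice_tmul, ← Matrix.mul_assoc]
    exact (h k).1
  · refine St15.dftSlice_inj fun k => ?_
    rw [St15.dftSlice_tmul, St15.dftSlice_tmul, ← Matrix.mul_assoc]
    exact (h k).2.1
  · refine St15.dftSlice_inj fun k => ?_
    rw [St15.dftSlice_tTr, St15.dftSlice_tmul]
    exact (h k).2.2.1
  · refine St15.dftSlice_inj fun k => ?_
    rw [St15.dftSlice_tTr, St15.dftSlice_tmul]
    exact (h k).2.2.2
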